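/- arXiv:1604.04746 — 2 statements merged into one kernel-verified Lean document; each statement's English description precedes it below -/
import Mathlib

section
/- Let p ≥ 0, let e ∈ Fin(p+1), and let F be a nonempty finite set of subsets of Fin(p+1) each of which contains e. Then the inclusion of the subcomplex ⨆_{T ∈ F} Face(T) into Δ[p] has the left lifting property with respect to all Kan fibrations. -/
open CategoryTheory Simplicial CategoryTheory.GrothendieckTopology

universe u

/-- A morphism of simplicial sets is a *Kan fibration* if it has the right lifting
property with respect to every horn inclusion `Λ[n, i] ⟶ Δ[n]` with `n ≥ 1`. -/
def IsKanFibration {X Y : SSet} (f : X ⟶ Y) : Prop :=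
  ∀ ⦃n : ℕ⦄ (i : Fin (n + 2)), HasLiftingProperty (SSet.horn (n + 1) i).ι f

namespace CategoryTheory.GrothendieckTopology.Subpresheaf

variable {C : Type*} [Category C] {F : Cᵒᵖ ⥤ Type u}

instance : InfSet (Subfunctor F) where
  sInf S :=
    { obj := fun U => ⋂ G ∈ S, Subfunctor.obj G U
      map := by
        intro U V i x hx
        simp only [Set.mem_iInter, Set.mem_preimage] at hx ⊢
        intro G hG
        exact G.map i (hx G hG) }

theorem sInf_obj (S : Set (Subfunctor F)) (U : Cᵒᵖ) :
    (sInf S).obj U = ⋂ G ∈ S, Subfunctor.obj G U := rfl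

/-- Subpresheaves of a presheaf of types form a complete lattice under objectwise
inclusion, with intersections (and hence unions) computed objectwise. -/
noncomputable instance : CompleteLattice (Subfunctor F) :=
  completeLatticeOfInf _ (fun S =>
    ⟨fun G hG U x hx => by
        rw [sInf_obj] at hx
        exact Set.mem_iInter₂.1 hx G hG,
     fun G hG U x hx => by
        rw [sInf_obj]
        exact Set.mem_iInter₂.2 fun H hH => hG hH U hx⟩)

end CategoryTheory.GrothendieckTopology.Subpresheaf

namespace CategoryTheory.GrothendieckTopology

/-- A subpresheaf of a simplicial set, regarded as a simplicial set. -/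
def Subpresheaf.sset {F : SSet} (G : Subfunctor F) : SSet := G.toFunctor

/-- The inclusion morphism of a subpresheaf of a simplicial set. -/
def Subpresheaf.ssetι {F : SSet} (G : Subfunctor F) : Subpresheaf.sset G ⟶ F := G.ι

/-- The inclusion morphism between two nested subpresheaves of a simplicial set. -/
def Subpresheaf.ssetHomOfLe {F : SSet} {G G' : Subfunctor F} (h : G ≤ G') :
    Subpresheaf.sset G ⟶ Subpresheaf.sset G' := Subfunctor.homOfLe h

end CategoryTheory.GrothendieckTopology

/-- `SSet.face p S` is the face of the standard simplex `Δ[p]` spanned by the set of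
vertices `S ⊆ Fin (p+1)` : the subpresheaf whose simplices are the monotone maps with
image (range) contained in `S`. -/
def SSet.face (p : ℕ) (S : Set (Fin (p + 1))) : Subfunctor (Δ[p] : SSet) where
  obj m := { α | Set.range (SSet.stdSimplex.asOrderHom α) ⊆ S }
  map := by
    intro U V i x hx y hy
    apply hx
    obtain ⟨z, rfl⟩ := hy
    exact ⟨i.unop.toOrderHom z, rfl⟩


namespace CategoryTheory.GrothendieckTopology.Subpresheaf

variable {C : Type*} [Category C] {F : Cᵒᵖ ⥤ Type u}

theorem le_def' {G G' : Subfunctor F} : G ≤ G' ↔ ∀ U, G.obj U ⊆ G'.obj U := Iff.rfl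

def unionFam {ι : Sort*} (f : ι → Subfunctor F) : Subfunctor F where
  obj U := ⋃ i, (f i).obj U
  map := by
    intro U V i x hx
    simp only [Set.mem_iUnion, Set.mem_preimage] at hx ⊢
    obtain ⟨j, hj⟩ := hx
    exact ⟨j, (f j).map i hj⟩

theorem iSup_obj' {ι : Sort*} (f : ι → Subfunctor F) (U : Cᵒᵖ) :
    (⨆ i, f i).obj U = ⋃ i, (f i).obj U := by
  apply subset_antisymm
  · exact (iSup_le (fun i => (le_def').2 (fun V => Set.subset_iUnion (fun j => (f j).obj V) i)) :
      (⨆ i, f i) ≤ unionFam f) U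
  · exact Set.iUnion_subset fun i => (le_iSup f i) U

theorem sup_obj' (G G' : Subfunctor F) (U : Cᵒᵖ) :
    (G ⊔ G').obj U = G.obj U ∪ G'.obj U := by
  have h : G ⊔ G' = ⨆ b : Bool, (bif b then G else G') := by
    apply le_antisymm
    · exact sup_le (le_iSup (fun b : Bool => bif b then G else G') true)
        (le_iSup (fun b : Bool => bif b then G else G') false)
    · exact iSup_le (fun b => by cases b <;> simp)
  rw [h, iSup_obj']
  ext x
  simp only [Set.mem_iUnion, Set.mem_union, Bool.exists_bool]
  tauto


end CategoryTheory.GrothendieckTopology.Subpresheaf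

namespace SSet

theorem simplex_ext {q : ℕ} {m : SimplexCategoryᵒᵖ} {α β : (Δ[q] : SSet).obj m}
    (h : ∀ i, stdSimplex.asOrderHom α i = stdSimplex.asOrderHom β i) : α = β := by
  cases α; cases β
  congr 1
  exact SimplexCategory.Hom.ext _ _ (OrderHom.ext _ _ (funext h))

theorem asOrderHom_map {q : ℕ} {m m' : SimplexCategoryᵒᵖ} (θ : m ⟶ m')
    (α : (Δ[q] : SSet).obj m) (i) :
    stdSimplex.asOrderHom ((Δ[q] : SSet).map θ α) i = stdSimplex.asOrderHom α (θ.unop.toOrderHom i) := rfl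

end SSet

set_option maxHeartbeats 1000000 in

set_option maxHeartbeats 1000000 in
open SSet in
theorem step_lift (p : ℕ) (e : Fin (p + 1)) (S : Finset (Fin (p + 1))) (n : ℕ)
    (hcard : S.card = n + 1) (heS : e ∉ S)
    (A : Subfunctor (Δ[p] : SSet))
    (h1 : ∀ {m : SimplexCategoryᵒᵖ} (α : (Δ[p] : SSet).obj m), α ∈ A.obj m →
      Set.range (stdSimplex.asOrderHom α) ⊆ ↑(insert e S) → ¬ ((↑S : Set (Fin (p+1))) ⊆ Set.range (stdSimplex.asOrderHom α)))
    (h2 : ∀ j ∈ S, SSet.face p (↑(insert e S) \ {j}) ≤ A)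
    {X Y : SSet} (g : X ⟶ Y) (hg : IsKanFibration g) :
    HasLiftingProperty
      (Subpresheaf.ssetHomOfLe
        (le_sup_left : A ≤ A ⊔ SSet.face p ↑(insert e S))) g := by
  classical
  have hcard' : (insert e S).card = n + 2 := by
    rw [Finset.card_insert_of_notMem heS, hcard]
  let σ : Fin (n + 2) ≃o {x // x ∈ insert e S} := (insert e S).orderIsoOfFin hcard'
  let δ : Fin (n + 2) →o Fin (p + 1) :=
    ⟨fun i => (σ i : Fin (p + 1)), fun i j hij => Subtype.coe_le_coe.2 (σ.monotone hij)⟩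
  have δinj : Function.Injective δ := fun i j hij => σ.injective (Subtype.ext hij)
  let k : Fin (n + 2) := σ.symm ⟨e, Finset.mem_insert_self e S⟩
  have hkdef : k = σ.symm ⟨e, Finset.mem_insert_self e S⟩ := rfl
  let φ : (Δ[n+1] : SSet) ⟶ (Δ[p] : SSet) :=
    SSet.stdSimplex.map (SimplexCategory.mkHom δ)
  have φ_apply : ∀ {m : SimplexCategoryᵒᵖ} (x : (Δ[n+1] : SSet).obj m) (i),
      stdSimplex.asOrderHom (φ.app m x) i = δ (stdSimplex.asOrderHom x i) := fun _ _ => rfl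
  -- the retraction onto the face
  let ret : ∀ {m : SimplexCategoryᵒᵖ} (α : (Δ[p] : SSet).obj m),
      Set.range (stdSimplex.asOrderHom α) ⊆ ↑(insert e S) → (Δ[n+1] : SSet).obj m :=
    fun {m} α hα => SSet.stdSimplex.objMk
      ⟨fun i => σ.symm ⟨stdSimplex.asOrderHom α i, Finset.mem_coe.1 (hα ⟨i, rfl⟩)⟩,
       fun i j hij => σ.symm.monotone (Subtype.mk_le_mk.2 ((stdSimplex.asOrderHom α).monotone hij))⟩
  have ret_apply : ∀ {m : SimplexCategoryᵒᵖ} (α : (Δ[p] : SSet).obj m)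
      (hα : Set.range (stdSimplex.asOrderHom α) ⊆ ↑(insert e S)) (i),
      stdSimplex.asOrderHom (ret α hα) i = σ.symm ⟨stdSimplex.asOrderHom α i, Finset.mem_coe.1 (hα ⟨i, rfl⟩)⟩ :=
    fun _ _ _ => rfl
  have φ_ret : ∀ {m : SimplexCategoryᵒᵖ} (α : (Δ[p] : SSet).obj m)
      (hα : Set.range (stdSimplex.asOrderHom α) ⊆ ↑(insert e S)),
      φ.app m (ret α hα) = α := by
    intro m α hα
    apply simplex_ext
    intro i
    show δ (stdSimplex.asOrderHom (ret α hα) i) = stdSimplex.asOrderHom α i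
    rw [ret_apply α hα i]
    show ((σ (σ.symm _) : {x // x ∈ insert e S}) : Fin (p+1)) = _
    rw [σ.apply_symm_apply]
  have ret_map : ∀ {m m' : SimplexCategoryᵒᵖ} (θ : m ⟶ m') (α : (Δ[p] : SSet).obj m)
      (hα : Set.range (stdSimplex.asOrderHom α) ⊆ ↑(insert e S))
      (hα' : Set.range (stdSimplex.asOrderHom ((Δ[p] : SSet).map θ α)) ⊆ ↑(insert e S)),
      ret ((Δ[p] : SSet).map θ α) hα' = (Δ[n+1] : SSet).map θ (ret α hα) := by
    intro m m' θ α hα hα'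
    apply simplex_ext
    intro i
    rfl
  have hornMem : ∀ {m : SimplexCategoryᵒᵖ} (α : (Δ[p] : SSet).obj m)
      (hα : Set.range (stdSimplex.asOrderHom α) ⊆ ↑(insert e S)) (j : Fin (p+1)), j ∈ S →
      j ∉ Set.range (stdSimplex.asOrderHom α) →
      Set.range (stdSimplex.asOrderHom (ret α hα)) ∪ {k} ≠ Set.univ := by
    intro m α hα j hjS hjr hu
    have hm : σ.symm ⟨j, Finset.mem_insert_of_mem hjS⟩ ∈
        Set.range (stdSimplex.asOrderHom (ret α hα)) ∪ {k} := hu ▸ Set.mem_univ _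
    rcases hm with h | h
    · obtain ⟨i, hi⟩ := h
      have h4 := σ.symm.injective ((ret_apply α hα i).symm.trans hi)
      exact hjr ⟨i, congrArg Subtype.val h4⟩
    · have h4 : (⟨j, Finset.mem_insert_of_mem hjS⟩ : {x // x ∈ insert e S})
          = ⟨e, Finset.mem_insert_self e S⟩ := σ.symm.injective (h.trans hkdef)
      have h5 : j = e := congrArg Subtype.val h4
      exact heS (h5 ▸ hjS)
  -- the map from the horn into A
  have ψmem : ∀ {m : SimplexCategoryᵒᵖ} (x : (Λ[n+1, k] : SSet).obj m),
      φ.app m x.1 ∈ A.obj m := by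
    intro m x
    obtain ⟨j', hj'⟩ := Set.ne_univ_iff_exists_notMem _ |>.1 x.2
    rw [Set.mem_union, not_or, Set.mem_singleton_iff] at hj'
    have hj'ne : (σ j' : Fin (p+1)) ≠ e := by
      intro hje
      have h5 : σ j' = ⟨e, Finset.mem_insert_self e S⟩ := Subtype.ext hje
      exact hj'.2 (by rw [hkdef, ← h5, σ.symm_apply_apply])
    have hj'S : (σ j' : Fin (p+1)) ∈ S := by
      rcases Finset.mem_insert.1 (σ j').2 with h | h
      · exact absurd h hj'ne
      · exact h
    refine h2 _ hj'S m ?_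
    intro y hy
    obtain ⟨i, rfl⟩ := hy
    rw [φ_apply]
    constructor
    · exact Finset.mem_coe.2 (σ (stdSimplex.asOrderHom x.1 i)).2
    · intro hmem
      rw [Set.mem_singleton_iff] at hmem
      exact hj'.1 ⟨i, δinj hmem⟩
  let ψ : (Λ[n+1, k] : SSet) ⟶ A.toFunctor :=
    { app := fun m => TypeCat.ofHom (fun x => ⟨φ.app m x.1, ψmem x⟩)
      naturality := by
        intro m m' θ
        ext x
        have h := ConcreteCategory.congr_hom (φ.naturality θ) x.1
        exact Subtype.ext h }
  have φ'mem : ∀ {m : SimplexCategoryᵒᵖ} (x : (Δ[n+1] : SSet).obj m),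
      φ.app m x ∈ (A ⊔ SSet.face p ↑(insert e S)).obj m := by
    intro m x
    refine (le_sup_right : SSet.face p ↑(insert e S) ≤ A ⊔ SSet.face p ↑(insert e S)) m ?_
    intro y hy
    obtain ⟨i, rfl⟩ := hy
    rw [φ_apply]
    exact Finset.mem_coe.2 (σ (stdSimplex.asOrderHom x i)).2
  let φ' : (Δ[n+1] : SSet) ⟶ (A ⊔ SSet.face p ↑(insert e S)).toFunctor :=
    { app := fun m => TypeCat.ofHom (fun x => ⟨φ.app m x, φ'mem x⟩)
      naturality := by
        intro m m' θ
        ext x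
        have h := ConcreteCategory.congr_hom (φ.naturality θ) x
        exact Subtype.ext h }
  have memface : ∀ {m : SimplexCategoryᵒᵖ}
      (x : (A ⊔ SSet.face p ↑(insert e S)).toFunctor.obj m), x.1 ∉ A.obj m →
      Set.range (stdSimplex.asOrderHom x.1) ⊆ ↑(insert e S) := by
    intro m x hA
    have hx := (Set.ext_iff.1 (Subpresheaf.sup_obj' A (SSet.face p ↑(insert e S)) m) x.1).1 x.2
    exact hx.resolve_left hA
  constructor
  intro u v sq
  have sq2 : CommSq (ψ ≫ u) ((SSet.horn (n+1) k).ι) g (φ' ≫ v) := by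
    constructor
    have hcomm : ψ ≫ Subfunctor.homOfLe (le_sup_left : A ≤ A ⊔ SSet.face p ↑(insert e S))
        = (SSet.horn (n+1) k).ι ≫ φ' := by
      apply NatTrans.ext
      funext m
      ext x
      exact Subtype.ext rfl
    exact ((Category.assoc _ _ _).trans (congrArg (ψ ≫ ·) sq.w)).trans
      (((Category.assoc _ _ _).symm.trans (congrArg (· ≫ v) hcomm)).trans (Category.assoc _ _ _))
  obtain ⟨⟨L, hL1, hL2⟩⟩ := ((hg k).sq_hasLift sq2).exists_lift
  have key : ∀ {m : SimplexCategoryᵒᵖ} (α : (Δ[p] : SSet).obj m) (hA : α ∈ A.obj m)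
      (hα : Set.range (stdSimplex.asOrderHom α) ⊆ ↑(insert e S)),
      L.app m (ret α hα) = u.app m ⟨α, hA⟩ := by
    intro m α hA hα
    obtain ⟨j, hjS, hjr⟩ := Set.not_subset.1 (h1 α hA hα)
    have hmem := hornMem α hα j (Finset.mem_coe.1 hjS) hjr
    have hh := ConcreteCategory.congr_hom (NatTrans.congr_app hL1 m) (⟨ret α hα, hmem⟩ : (Λ[n+1,k] : SSet).obj m)
    have h3 : ψ.app m ⟨ret α hα, hmem⟩ = ⟨α, hA⟩ := Subtype.ext (φ_ret α hα)
    exact hh.trans (congrArg (u.app m) h3)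
  have hα'map : ∀ {m m' : SimplexCategoryᵒᵖ} (θ : m ⟶ m') (α : (Δ[p] : SSet).obj m),
      Set.range (stdSimplex.asOrderHom α) ⊆ ↑(insert e S) →
      Set.range (stdSimplex.asOrderHom ((Δ[p] : SSet).map θ α)) ⊆ ↑(insert e S) := by
    intro m m' θ α hα y hy
    obtain ⟨i, rfl⟩ := hy
    exact hα ⟨θ.unop.toOrderHom i, rfl⟩
  let lapp : ∀ (m : SimplexCategoryᵒᵖ)
      (x : (A ⊔ SSet.face p ↑(insert e S)).toFunctor.obj m), X.obj m := fun m x =>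
    if hA : x.1 ∈ A.obj m then u.app m ⟨x.1, hA⟩ else L.app m (ret x.1 (memface x hA))
  have lnat : ∀ {m m' : SimplexCategoryᵒᵖ} (θ : m ⟶ m')
      (x : (A ⊔ SSet.face p ↑(insert e S)).toFunctor.obj m),
      lapp m' ((A ⊔ SSet.face p ↑(insert e S)).toFunctor.map θ x) = X.map θ (lapp m x) := by
    intro m m' θ x
    unfold lapp
    beta_reduce
    split_ifs with h1 h2
    · exact ConcreteCategory.congr_hom (u.naturality θ) ⟨x.1, h2⟩
    · have hα := memface x h2
      have hα' : Set.range (stdSimplex.asOrderHom ((Δ[p] : SSet).map θ x.1)) ⊆ ↑(insert e S) :=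
        hα'map θ x.1 hα
      have e1 : L.app m' (ret ((Δ[p] : SSet).map θ x.1) hα')
          = X.map θ (L.app m (ret x.1 hα)) :=
        (congrArg (L.app m') (ret_map θ x.1 hα hα')).trans
          (ConcreteCategory.congr_hom (L.naturality θ) (ret x.1 hα))
      exact (key _ h1 hα').symm.trans e1
    · next h2 => exact absurd (A.map θ h2) h1
    · next h2 =>
      have hα := memface x h2
      have hα' : Set.range (stdSimplex.asOrderHom ((Δ[p] : SSet).map θ x.1)) ⊆ ↑(insert e S) :=
        hα'map θ x.1 hα
      exact (congrArg (L.app m') (ret_map θ x.1 hα hα')).trans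
        (ConcreteCategory.congr_hom (L.naturality θ) (ret x.1 hα))
  let l : (A ⊔ SSet.face p ↑(insert e S)).toFunctor ⟶ X :=
    { app := fun m => TypeCat.ofHom (lapp m)
      naturality := by
        intro m m' θ
        ext x
        exact lnat θ x }
  have fac_left : Subpresheaf.ssetHomOfLe
      (le_sup_left : A ≤ A ⊔ SSet.face p ↑(insert e S)) ≫ l = u := by
    apply NatTrans.ext
    funext m
    ext x
    show lapp m _ = u.app m x
    unfold lapp
    beta_reduce
    split_ifs with h
    · rfl
    · exact absurd x.2 h
  have fac_right : l ≫ g = v := by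
    apply NatTrans.ext
    funext m
    ext x
    show g.app m (lapp m x) = v.app m x
    unfold lapp
    beta_reduce
    split_ifs with h
    · exact ConcreteCategory.congr_hom (NatTrans.congr_app sq.w m) ⟨x.1, h⟩
    · exact (ConcreteCategory.congr_hom (NatTrans.congr_app hL2 m) (ret x.1 (memface x h))).trans
        (congrArg (v.app m) (Subtype.ext (φ_ret x.1 (memface x h))))
  exact CommSq.HasLift.mk' ⟨l, fac_left, fac_right⟩

open SSet in
theorem full_lift (p : ℕ) (A : Subfunctor (Δ[p] : SSet))
    (hA : ∀ (m : SimplexCategoryᵒᵖ) (α : (Δ[p] : SSet).obj m), α ∈ A.obj m)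
    {X Y : SSet} (g : X ⟶ Y) : HasLiftingProperty (Subpresheaf.ssetι A) g := by
  constructor
  intro u v sq
  let l : (Δ[p] : SSet) ⟶ X :=
    { app := fun m => TypeCat.ofHom (fun α => u.app m ⟨α, hA m α⟩)
      naturality := by
        intro m m' θ
        ext α
        exact ConcreteCategory.congr_hom (u.naturality θ) ⟨α, hA m α⟩ }
  refine CommSq.HasLift.mk' ⟨l, ?_, ?_⟩
  · apply NatTrans.ext
    funext m
    ext x
    show u.app m ⟨x.1, _⟩ = u.app m x
    rfl
  · apply NatTrans.ext
    funext m
    ext α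
    exact ConcreteCategory.congr_hom (NatTrans.congr_app sq.w m) ⟨α, hA m α⟩

open SSet in
theorem mem_big_sup (p : ℕ) (F : Finset (Finset (Fin (p + 1))))
    {m : SimplexCategoryᵒᵖ} (α : (Δ[p] : SSet).obj m) :
    α ∈ (⨆ T ∈ F, SSet.face p (T : Set (Fin (p + 1)))).obj m ↔
      ∃ T ∈ F, Set.range (stdSimplex.asOrderHom α) ⊆ (T : Set (Fin (p + 1))) := by
  simp only [Subpresheaf.iSup_obj', Set.mem_iUnion]
  exact ⟨fun ⟨T, h, hs⟩ => ⟨T, h, hs⟩, fun ⟨T, h, hs⟩ => ⟨T, h, hs⟩⟩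

open SSet in
theorem bad_empty_case (p : ℕ) (e : Fin (p + 1)) (F : Finset (Finset (Fin (p + 1))))
    (he : ∀ T ∈ F, e ∈ T)
    [DecidablePred fun S : Finset (Fin (p+1)) => e ∉ S ∧ ∀ T ∈ F, ¬ S ⊆ T]
    (hempty : (Finset.univ.filter
      (fun S : Finset (Fin (p+1)) => e ∉ S ∧ ∀ T ∈ F, ¬ S ⊆ T)) = ∅)
    {X Y : SSet} (g : X ⟶ Y) :
    HasLiftingProperty
      (Subpresheaf.ssetι (⨆ T ∈ F, SSet.face p (T : Set (Fin (p + 1))))) g := by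
  classical
  apply full_lift
  intro m α
  set R : Finset (Fin (p+1)) :=
    Finset.univ.filter (fun j => j ∈ Set.range (stdSimplex.asOrderHom α) ∧ j ≠ e) with hRdef
  have heR : e ∉ R := by
    intro h
    exact ((Finset.mem_filter.1 h).2.2) rfl
  have hnot : ¬ (e ∉ R ∧ ∀ T ∈ F, ¬ R ⊆ T) := by
    intro h
    have hmem : R ∈ Finset.univ.filter
        (fun S : Finset (Fin (p+1)) => e ∉ S ∧ ∀ T ∈ F, ¬ S ⊆ T) :=
      Finset.mem_filter.2 ⟨Finset.mem_univ _, h⟩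
    rw [hempty] at hmem
    exact absurd hmem (Finset.notMem_empty R)
  push_neg at hnot
  obtain ⟨T, hT, hsub⟩ := hnot heR
  refine (mem_big_sup p F α).2 ⟨T, hT, ?_⟩
  intro y hy
  by_cases hye : y = e
  · subst hye; exact he T hT
  · exact hsub (Finset.mem_filter.2 ⟨Finset.mem_univ _, hy, hye⟩)


/-- **Face completion.** Let `F` be an inhabited (finite, decidable) set of faces of
`Δ[p]` which all contain a common vertex `e`. Then the inclusion `⋃ F ⟶ Δ[p]` has the
left lifting property with respect to all Kan fibrations. -/
theorem face_completion (p : ℕ) (e : Fin (p + 1)) (F : Finset (Finset (Fin (p + 1))))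
    (hne : F.Nonempty) (he : ∀ T ∈ F, e ∈ T)
    {X Y : SSet} (g : X ⟶ Y) (hg : IsKanFibration g) :
    HasLiftingProperty
      (Subpresheaf.ssetι (⨆ T ∈ F, SSet.face p (T : Set (Fin (p + 1))))) g := by
  classical
  suffices H : ∀ (N : ℕ) (F : Finset (Finset (Fin (p + 1)))), F.Nonempty →
      (∀ T ∈ F, e ∈ T) →
      (Finset.univ.filter
        (fun S : Finset (Fin (p+1)) => e ∉ S ∧ ∀ T ∈ F, ¬ S ⊆ T)).card ≤ N →
      HasLiftingProperty
        (Subpresheaf.ssetι (⨆ T ∈ F, SSet.face p (T : Set (Fin (p + 1))))) g by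
    exact H _ F hne he le_rfl
  intro N
  induction N with
  | zero =>
    intro F hne he hcard
    exact bad_empty_case p e F he (Finset.card_eq_zero.1 (Nat.le_zero.1 hcard)) g
  | succ N ih =>
    intro F hne he hcard
    by_cases hb : (Finset.univ.filter
        (fun S : Finset (Fin (p+1)) => e ∉ S ∧ ∀ T ∈ F, ¬ S ⊆ T)) = ∅
    · exact bad_empty_case p e F he hb g
    · obtain ⟨S, hSbad, hSmin⟩ := Finset.exists_min_image _ Finset.card
        (Finset.nonempty_of_ne_empty hb)
      have heS : e ∉ S := (Finset.mem_filter.1 hSbad).2.1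
      have hSbadP : ∀ T ∈ F, ¬ S ⊆ T := (Finset.mem_filter.1 hSbad).2.2
      have hSne : S.Nonempty := by
        rcases S.eq_empty_or_nonempty with rfl | h
        · obtain ⟨T, hT⟩ := hne
          exact absurd (Finset.empty_subset T) (hSbadP T hT)
        · exact h
      obtain ⟨n, hn⟩ : ∃ n, S.card = n + 1 :=
        ⟨S.card - 1, (Nat.succ_pred_eq_of_pos (Finset.card_pos.2 hSne)).symm⟩
      set A : Subfunctor (Δ[p] : SSet) := ⨆ T ∈ F, SSet.face p (T : Set (Fin (p + 1)))
        with hAdef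
      -- the enlarged family
      set F' : Finset (Finset (Fin (p + 1))) := insert (insert e S) F with hF'def
      have hne' : F'.Nonempty := Finset.insert_nonempty _ _
      have he' : ∀ T ∈ F', e ∈ T := by
        intro T hT
        rcases Finset.mem_insert.1 hT with rfl | h
        · exact Finset.mem_insert_self _ _
        · exact he T h
      have hbadsub : (Finset.univ.filter
            (fun S' : Finset (Fin (p+1)) => e ∉ S' ∧ ∀ T ∈ F', ¬ S' ⊆ T)) ⊆
          (Finset.univ.filter
            (fun S' : Finset (Fin (p+1)) => e ∉ S' ∧ ∀ T ∈ F, ¬ S' ⊆ T)).erase S := by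
        intro S' hS'
        obtain ⟨-, heS', hS'P⟩ := Finset.mem_filter.1 hS'
        refine Finset.mem_erase.2 ⟨?_, Finset.mem_filter.2 ⟨Finset.mem_univ _, heS',
          fun T hT => hS'P T (Finset.mem_insert_of_mem hT)⟩⟩
        intro hEq
        subst hEq
        exact hS'P _ (Finset.mem_insert_self _ _) (Finset.subset_insert _ _)
      have hcard' : (Finset.univ.filter
          (fun S' : Finset (Fin (p+1)) => e ∉ S' ∧ ∀ T ∈ F', ¬ S' ⊆ T)).card ≤ N := by
        have h4 := Finset.card_le_card hbadsub
        rw [Finset.card_erase_of_mem hSbad] at h4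
        omega
      have IH := ih F' hne' he' hcard'
      have hsup : (⨆ T ∈ F', SSet.face p (T : Set (Fin (p + 1))))
          = A ⊔ SSet.face p ↑(insert e S) := by
        rw [hF'def, Finset.iSup_insert, hAdef]
        exact sup_comm _ _
      rw [hsup] at IH
      -- hypotheses of the step lemma
      have h1 : ∀ {m : SimplexCategoryᵒᵖ} (α : (Δ[p] : SSet).obj m), α ∈ A.obj m →
          Set.range (SSet.stdSimplex.asOrderHom α) ⊆ ↑(insert e S) →
          ¬ ((↑S : Set (Fin (p+1))) ⊆ Set.range (SSet.stdSimplex.asOrderHom α)) := by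
        intro m α hA _ hsub
        obtain ⟨T, hT, hrange⟩ := (mem_big_sup p F α).1 hA
        exact hSbadP T hT (Finset.coe_subset.1 (hsub.trans hrange))
      have h2 : ∀ j ∈ S, SSet.face p (↑(insert e S) \ {j}) ≤ A := by
        intro j hj
        have hgood : ∃ T ∈ F, S.erase j ⊆ T := by
          by_contra hbad2
          push_neg at hbad2
          have hmem : S.erase j ∈ Finset.univ.filter
              (fun S' : Finset (Fin (p+1)) => e ∉ S' ∧ ∀ T ∈ F, ¬ S' ⊆ T) :=
            Finset.mem_filter.2 ⟨Finset.mem_univ _,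
              fun h => heS (Finset.mem_of_mem_erase h), hbad2⟩
          have := hSmin _ hmem
          have hlt : (S.erase j).card < S.card := Finset.card_erase_lt_of_mem hj
          omega
        obtain ⟨T, hT, hsub⟩ := hgood
        intro U α hα
        refine (mem_big_sup p F α).2 ⟨T, hT, ?_⟩
        intro y hy
        obtain ⟨hy1, hy2⟩ := hα hy
        rcases Finset.mem_insert.1 (Finset.mem_coe.1 hy1) with rfl | hyS
        · exact he T hT
        · refine hsub (Finset.mem_erase.2 ⟨?_, hyS⟩)
          intro hEq
          exact hy2 (hEq ▸ rfl)
      have hstep := step_lift p e S n hn heS A h1 h2 g hg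
      have hfact : Subpresheaf.ssetι A
          = Subpresheaf.ssetHomOfLe
              (le_sup_left : A ≤ A ⊔ SSet.face p ↑(insert e S))
            ≫ Subpresheaf.ssetι (A ⊔ SSet.face p ↑(insert e S)) :=
        (Subfunctor.homOfLe_ι _).symm
      rw [hAdef] at hfact
      rw [hfact]
      haveI := hstep
      haveI := IH
      infer_instance
end

section
/- Let p ≥ 0, e ∈ Fin(p+1), let F be a nonempty finite set of subsets of Fin(p+1) each containing e, and for j ∈ {0, …, p} set F_j = F ∪ { T ⊆ Fin(p+1) : e ∈ T and |T| = j+1 }. Then for every j with 1 ≤ j ≤ p, the inclusion of subcomplexes ⨆_{T ∈ F_{j-1}} Face(T) ⟶ ⨆_{T ∈ F_j} Face(T) of Δ[p] has the left lifting property with respect to all Kan fibrations. -/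
open CategoryTheory Simplicial CategoryTheory.GrothendieckTopology

universe u

section Aux

open CategoryTheory Simplicial CategoryTheory.GrothendieckTopology

namespace SkelAux

variable {C : Type*} [Category C] {P : Cᵒᵖ ⥤ Type u}

theorem mem_iSup_iff {ι : Sort*} (G : ι → Subfunctor P) {U : Cᵒᵖ} {x : P.obj U} :
    x ∈ (⨆ i, G i).obj U ↔ ∃ i, x ∈ (G i).obj U := by
  constructor
  · intro hx
    have hle : (⨆ i, G i) ≤
        ⟨fun V => ⋃ i, (G i).obj V, by
          intro V W f y hy
          simp only [Set.mem_iUnion, Set.mem_preimage] at hy ⊢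
          obtain ⟨i, hi⟩ := hy
          exact ⟨i, (G i).map f hi⟩⟩ := by
      refine iSup_le fun i V y hy => ?_
      exact Set.mem_iUnion.2 ⟨i, hy⟩
    exact Set.mem_iUnion.1 (hle U hx)
  · rintro ⟨i, hi⟩
    exact le_iSup G i U hi

theorem mem_sup_iff {A B : Subfunctor P} {U : Cᵒᵖ} {x : P.obj U} :
    x ∈ (A ⊔ B).obj U ↔ x ∈ A.obj U ∨ x ∈ B.obj U := by
  constructor
  · intro hx
    have hle : A ⊔ B ≤
        ⟨fun V => A.obj V ∪ B.obj V, by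
          intro V W f y hy
          rcases hy with hy | hy
          · exact Or.inl (A.map f hy)
          · exact Or.inr (B.map f hy)⟩ := by
      refine sup_le ?_ ?_ <;> intro V y hy
      · exact Or.inl hy
      · exact Or.inr hy
    exact hle U hx
  · rintro (h | h)
    · exact le_sup_left (a := A) (b := B) U h
    · exact le_sup_right (a := A) (b := B) U h

theorem face_mono (p : ℕ) {S S' : Set (Fin (p+1))} (h : S ⊆ S') :
    SSet.face p S ≤ SSet.face p S' :=
  fun _ _ hx => le_trans hx h

/-- simplices are determined by their order homs -/
theorem simplex_ext {p : ℕ} {n : SimplexCategoryᵒᵖ} (x y : (Δ[p] : SSet).obj n)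
    (h : ∀ a, SSet.stdSimplex.asOrderHom x a = SSet.stdSimplex.asOrderHom y a) : x = y := by
  apply (SSet.stdSimplex.objEquiv).injective
  exact SimplexCategory.Hom.ext _ _ (OrderHom.ext _ _ (funext h))

variable (p q : ℕ) (T : Finset (Fin (p+1))) (hcard : T.card = q+2)

/-- the order embedding `Fin (q+2) → Fin (p+1)` with image `T` -/
def mOrd : Fin (q+2) →o Fin (p+1) :=
  ⟨fun i => (T.orderIsoOfFin hcard i : Fin (p+1)),
   fun _ _ hab => (T.orderIsoOfFin hcard).monotone hab⟩

theorem mOrd_injective : Function.Injective (mOrd p q T hcard) := by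
  intro a b hab
  exact (T.orderIsoOfFin hcard).injective (Subtype.ext hab)

theorem mOrd_mem (a : Fin (q+2)) : mOrd p q T hcard a ∈ T :=
  (T.orderIsoOfFin hcard a).2

/-- the morphism `Δ[q+1] ⟶ Δ[p]` corresponding to the face `T` -/
def fT : (Δ[q+1] : SSet) ⟶ Δ[p] :=
  SSet.stdSimplex.map (SimplexCategory.mkHom (mOrd p q T hcard))

theorem fT_asOrderHom {n : SimplexCategoryᵒᵖ} (y : (Δ[q+1] : SSet).obj n) (a) :
    SSet.stdSimplex.asOrderHom ((fT p q T hcard).app n y) a = mOrd p q T hcard (SSet.stdSimplex.asOrderHom y a) := rfl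

theorem fT_app_injective (n : SimplexCategoryᵒᵖ) : Function.Injective ((fT p q T hcard).app n) := by
  intro y₁ y₂ h
  refine simplex_ext _ _ fun a => mOrd_injective p q T hcard ?_
  rw [← fT_asOrderHom, ← fT_asOrderHom, h]

theorem range_fT {n : SimplexCategoryᵒᵖ} (y : (Δ[q+1] : SSet).obj n) :
    Set.range (SSet.stdSimplex.asOrderHom ((fT p q T hcard).app n y)) ⊆ ↑T := by
  rintro _ ⟨a, rfl⟩
  exact mOrd_mem p q T hcard _

/-- preimage of a simplex of the face `T` under `fT` -/
def preimg {n : SimplexCategoryᵒᵖ} (x : (Δ[p] : SSet).obj n)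
    (hx : Set.range (SSet.stdSimplex.asOrderHom x) ⊆ ↑T) : (Δ[q+1] : SSet).obj n :=
  SSet.stdSimplex.objMk
    ⟨fun a => (T.orderIsoOfFin hcard).symm ⟨SSet.stdSimplex.asOrderHom x a, hx ⟨a, rfl⟩⟩,
     fun _ _ hab => (T.orderIsoOfFin hcard).symm.monotone
       (Subtype.mk_le_mk.2 ((SSet.stdSimplex.asOrderHom x).monotone hab))⟩

theorem fT_preimg {n : SimplexCategoryᵒᵖ} (x : (Δ[p] : SSet).obj n)
    (hx : Set.range (SSet.stdSimplex.asOrderHom x) ⊆ ↑T) :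
    (fT p q T hcard).app n (preimg p q T hcard x hx) = x := by
  refine simplex_ext _ _ fun a => ?_
  rw [fT_asOrderHom]
  show ((T.orderIsoOfFin hcard) ((T.orderIsoOfFin hcard).symm _) : Fin (p+1)) = _
  rw [OrderIso.apply_symm_apply]

theorem range_map {n n' : SimplexCategoryᵒᵖ} (i : n ⟶ n') (x : (Δ[p] : SSet).obj n) :
    Set.range (SSet.stdSimplex.asOrderHom ((Δ[p] : SSet).map i x)) ⊆ Set.range (SSet.stdSimplex.asOrderHom x) := by
  rintro _ ⟨a, rfl⟩
  exact ⟨i.unop.toOrderHom a, rfl⟩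

theorem preimg_natural {n n' : SimplexCategoryᵒᵖ} (i : n ⟶ n') (x : (Δ[p] : SSet).obj n)
    (hx : Set.range (SSet.stdSimplex.asOrderHom x) ⊆ ↑T) :
    (Δ[q+1] : SSet).map i (preimg p q T hcard x hx)
      = preimg p q T hcard ((Δ[p] : SSet).map i x) (le_trans (range_map p i x) hx) := by
  exact simplex_ext _ _ fun a => rfl

end SkelAux

end Aux

namespace SkelAux

open CategoryTheory Simplicial CategoryTheory.GrothendieckTopology

set_option maxHeartbeats 1000000 in
open Classical in
theorem step (p q : ℕ) (e : Fin (p+1)) (T : Finset (Fin (p+1))) (heT : e ∈ T)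
    (hcard : T.card = q+2) (A' B' : Subfunctor (Δ[p] : SSet))
    (hAB : A' ≤ B') (hface : SSet.face p ↑T ≤ B')
    (hcover : ∀ {n : SimplexCategoryᵒᵖ} (x : (Δ[p] : SSet).obj n), x ∈ B'.obj n →
      x ∈ A'.obj n ∨ Set.range (SSet.stdSimplex.asOrderHom x) ⊆ ↑T)
    (H1 : ∀ {n : SimplexCategoryᵒᵖ} (y : (Δ[q+1] : SSet).obj n),
      Set.range (SSet.stdSimplex.asOrderHom y) ∪ {(T.orderIsoOfFin hcard).symm ⟨e, heT⟩} ≠ Set.univ →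
      (fT p q T hcard).app n y ∈ A'.obj n)
    (H2 : ∀ {n : SimplexCategoryᵒᵖ} (y : (Δ[q+1] : SSet).obj n),
      (fT p q T hcard).app n y ∈ A'.obj n →
      Set.range (SSet.stdSimplex.asOrderHom y) ∪ {(T.orderIsoOfFin hcard).symm ⟨e, heT⟩} ≠ Set.univ)
    {X Y : SSet} (g : X ⟶ Y) (hg : IsKanFibration g) :
    HasLiftingProperty (Subpresheaf.ssetHomOfLe hAB) g := by
  set k : Fin (q+2) := (T.orderIsoOfFin hcard).symm ⟨e, heT⟩ with hk
  set f : (Δ[q+1] : SSet) ⟶ Δ[p] := fT p q T hcard with hf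
  constructor
  intro u v sq
  have unat : ∀ {n n' : SimplexCategoryᵒᵖ} (i : n ⟶ n') (x : (Δ[p] : SSet).obj n)
      (hx : x ∈ A'.obj n),
      X.map i (u.app n ⟨x, hx⟩) = u.app n' ⟨(Δ[p] : SSet).map i x, A'.map i hx⟩ :=
    fun {n n'} i x hx => (NatTrans.naturality_apply u i (⟨x, hx⟩ : (Subpresheaf.sset A').obj n)).symm
  have sqw : ∀ {n : SimplexCategoryᵒᵖ} (x : (Δ[p] : SSet).obj n) (hx : x ∈ A'.obj n),
      g.app n (u.app n ⟨x, hx⟩) = v.app n ⟨x, hAB _ hx⟩ :=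
    fun {n} x hx => ConcreteCategory.congr_hom (NatTrans.congr_app sq.w n) (⟨x, hx⟩ : (Subpresheaf.sset A').obj n)
  -- the horn map to X
  let w : (Λ[q+1, k] : SSet) ⟶ X :=
    { app := fun n => TypeCat.ofHom (fun y => u.app n ⟨f.app n y.1, H1 y.1 y.2⟩)
      naturality := by
        intro n n' i
        refine ConcreteCategory.hom_ext _ _ fun y => ?_
        simp only [types_comp_apply, TypeCat.ofHom_apply]
        rw [unat i _ _]
        exact congrArg (u.app n') (Subtype.ext (NatTrans.naturality_apply f i y.1).symm) }
  -- the map Δ[q+1] ⟶ B'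
  let fB : (Δ[q+1] : SSet) ⟶ (Subpresheaf.sset B') :=
    { app := fun n => TypeCat.ofHom (fun y => ⟨f.app n y, hface _ (range_fT p q T hcard y)⟩)
      naturality := by
        intro n n' i
        refine ConcreteCategory.hom_ext _ _ fun y => ?_
        have := NatTrans.naturality_apply f i y; exact Subtype.ext this }
  let t : (Δ[q+1] : SSet) ⟶ Y := fB ≫ v
  have hsq : CommSq w ((SSet.horn (q+1) k).ι) g t := by
    constructor
    apply NatTrans.ext
    funext n; refine ConcreteCategory.hom_ext _ _ fun y => ?_
    show g.app n (u.app n ⟨f.app n y.1, _⟩) = v.app n (fB.app n y.1)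
    rw [sqw]; rfl
  obtain ⟨lft⟩ := ((hg k).sq_hasLift hsq).exists_lift
  have lnat : ∀ {n n' : SimplexCategoryᵒᵖ} (i : n ⟶ n') (y : (Δ[q+1] : SSet).obj n),
      X.map i (lft.l.app n y) = lft.l.app n' ((Δ[q+1] : SSet).map i y) :=
    fun i y => (NatTrans.naturality_apply lft.l i y).symm
  have lhorn : ∀ {n : SimplexCategoryᵒᵖ} (y : (Δ[q+1] : SSet).obj n)
      (hy : Set.range (SSet.stdSimplex.asOrderHom y) ∪ {k} ≠ Set.univ),
      lft.l.app n y = u.app n ⟨f.app n y, H1 y hy⟩ := by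
    intro n y hy
    have := ConcreteCategory.congr_hom (NatTrans.congr_app lft.fac_left n) (⟨y, hy⟩ : (Λ[q+1, k] : SSet).obj n)
    exact this
  -- the lift
  let L : (Subpresheaf.sset B') ⟶ X :=
    { app := fun n => TypeCat.ofHom (fun x =>
        if h : x.1 ∈ A'.obj n then u.app n ⟨x.1, h⟩
        else lft.l.app n (preimg p q T hcard x.1 ((hcover x.1 x.2).resolve_left h)))
      naturality := by
        intro n n' i
        refine ConcreteCategory.hom_ext _ _ fun x => ?_
        simp only [types_comp_apply, TypeCat.ofHom_apply]
        by_cases h : x.1 ∈ A'.obj n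
        · rw [dif_pos h, unat i _ h]
          have h2 : (((Subpresheaf.sset B').map i x).1 : (Δ[p] : SSet).obj n') ∈ A'.obj n' := A'.map i h
          rw [dif_pos h2]
          rfl
        · rw [dif_neg h, lnat i _, preimg_natural]
          by_cases h2 : (((Subpresheaf.sset B').map i x).1 : (Δ[p] : SSet).obj n') ∈ A'.obj n'
          · rw [dif_pos h2]
            have hx' : Set.range (SSet.stdSimplex.asOrderHom ((Δ[p] : SSet).map i x.1)) ⊆ ↑T :=
              le_trans (range_map p i x.1) ((hcover x.1 x.2).resolve_left h)
            have hy : (fT p q T hcard).app n'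
                (preimg p q T hcard ((Δ[p] : SSet).map i x.1) hx') ∈ A'.obj n' := by
              rw [fT_preimg]; exact h2
            rw [lhorn _ (H2 _ hy)]
            refine congrArg (u.app n') (Subtype.ext ?_)
            exact (fT_preimg p q T hcard _ hx').symm
          · rw [dif_neg h2]
            rfl }
  have fac1 : Subpresheaf.ssetHomOfLe hAB ≫ L = u := by
    apply NatTrans.ext
    funext n; refine ConcreteCategory.hom_ext _ _ fun x => ?_
    exact dif_pos x.2
  have fac2 : L ≫ g = v := by
    apply NatTrans.ext
    funext n; refine ConcreteCategory.hom_ext _ _ fun x => ?_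
    by_cases h : x.1 ∈ A'.obj n
    · show g.app n (dite _ _ _) = v.app n x
      rw [dif_pos h, sqw]
      rfl
    · show g.app n (dite _ _ _) = v.app n x
      rw [dif_neg h]
      have h3 : g.app n (lft.l.app n (preimg p q T hcard x.1 ((hcover x.1 x.2).resolve_left h)))
          = t.app n (preimg p q T hcard x.1 ((hcover x.1 x.2).resolve_left h)) :=
        ConcreteCategory.congr_hom (NatTrans.congr_app lft.fac_right n) _
      rw [h3]
      show v.app n (fB.app n _) = v.app n x
      exact congrArg (v.app n) (Subtype.ext (fT_preimg p q T hcard _ _))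
  exact CommSq.HasLift.mk ⟨L, fac1, fac2⟩

end SkelAux

namespace SkelAux

open CategoryTheory Simplicial CategoryTheory.GrothendieckTopology

theorem chain (p q : ℕ) (e : Fin (p+1)) (F : Finset (Finset (Fin (p+1))))
    (A₀ : Subfunctor (Δ[p] : SSet))
    (hA1 : ∀ U : Finset (Fin (p+1)), e ∈ U → U.card = q+1 → SSet.face p ↑U ≤ A₀)
    (hA2 : ∀ {n : SimplexCategoryᵒᵖ} (x : (Δ[p] : SSet).obj n), x ∈ A₀.obj n →
      ∃ W : Finset (Fin (p+1)), e ∈ W ∧ (W ∈ F ∨ W.card = q+1) ∧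
        Set.range (SSet.stdSimplex.asOrderHom x) ⊆ ↑W)
    {X Y : SSet} (g : X ⟶ Y) (hg : IsKanFibration g) :
    ∀ (G : Finset (Finset (Fin (p+1)))),
      (∀ T ∈ G, e ∈ T ∧ T.card = q+2 ∧ ¬∃ S ∈ F, T ⊆ S) →
      ∀ (B' : Subfunctor (Δ[p] : SSet)),
        B' = A₀ ⊔ ⨆ T ∈ G, SSet.face p (↑T : Set (Fin (p+1))) →
        ∀ (h : A₀ ≤ B'), HasLiftingProperty (Subpresheaf.ssetHomOfLe h) g := by
  intro G
  induction G using Finset.induction_on with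
  | empty =>
    intro _ B' hB' h
    have hrev : B' ≤ A₀ := by
      rw [hB']
      exact sup_le le_rfl (iSup_le fun T => iSup_le fun hT =>
        absurd hT (Finset.notMem_empty T))
    have : IsIso (Subpresheaf.ssetHomOfLe h) :=
      ⟨Subpresheaf.ssetHomOfLe hrev, rfl, rfl⟩
    infer_instance
  | @insert T G0 hTG ih =>
    intro hG B' hB' h
    obtain ⟨heT, hcard, hnsub⟩ := hG T (Finset.mem_insert_self T G0)
    have hG0 : ∀ T' ∈ G0, e ∈ T' ∧ T'.card = q+2 ∧ ¬∃ S ∈ F, T' ⊆ S :=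
      fun T' hT' => hG T' (Finset.mem_insert_of_mem hT')
    set M : Subfunctor (Δ[p] : SSet) :=
      A₀ ⊔ ⨆ T' ∈ G0, SSet.face p (↑T' : Set (Fin (p+1))) with hM
    have h1 : A₀ ≤ M := le_sup_left
    have hMB : M ≤ B' := by
      rw [hB', hM]
      refine sup_le le_sup_left (iSup_le fun T' => iSup_le fun hT' => ?_)
      exact le_trans
        (le_iSup₂ (f := fun (T'' : Finset (Fin (p+1))) (_ : T'' ∈ insert T G0) =>
          SSet.face p (↑T'' : Set (Fin (p+1)))) T' (Finset.mem_insert_of_mem hT'))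
        le_sup_right
    have hkey : Subpresheaf.ssetHomOfLe h
        = Subpresheaf.ssetHomOfLe h1 ≫ Subpresheaf.ssetHomOfLe hMB := rfl
    have i1 : HasLiftingProperty (Subpresheaf.ssetHomOfLe h1) g := ih hG0 M hM h1
    have i2 : HasLiftingProperty (Subpresheaf.ssetHomOfLe hMB) g := by
      refine step p q e T heT hcard M B' hMB ?_ ?_ ?_ ?_ g hg
      · -- face ≤ B'
        rw [hB']
        exact le_trans
          (le_iSup₂ (f := fun (T'' : Finset (Fin (p+1))) (_ : T'' ∈ insert T G0) =>
            SSet.face p (↑T'' : Set (Fin (p+1)))) T (Finset.mem_insert_self T G0))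
          le_sup_right
      · -- cover
        intro n x hx
        rw [hB'] at hx
        rcases mem_sup_iff.1 hx with h' | h'
        · exact Or.inl (h1 n h')
        · obtain ⟨T', hmem⟩ := (mem_iSup_iff _).1 h'
          obtain ⟨hT', hface'⟩ := (mem_iSup_iff _).1 hmem
          rcases Finset.mem_insert.1 hT' with rfl | hT'G0
          · exact Or.inr hface'
          · refine Or.inl ?_
            have : SSet.face p (↑T' : Set (Fin (p+1))) ≤ M := by
              rw [hM]
              exact le_trans
                (le_iSup₂ (f := fun (T'' : Finset (Fin (p+1))) (_ : T'' ∈ G0) =>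
                  SSet.face p (↑T'' : Set (Fin (p+1)))) T' hT'G0) le_sup_right
            exact this n hface'
      · -- H1
        intro n y hy
        obtain ⟨m', hm'⟩ := Set.ne_univ_iff_exists_notMem _ |>.1 hy
        simp only [Set.mem_union, Set.mem_range, Set.mem_singleton_iff, not_or, not_exists] at hm'
        obtain ⟨hm'range, hm'k⟩ := hm'
        have hke : mOrd p q T hcard ((T.orderIsoOfFin hcard).symm ⟨e, heT⟩) = e := by
          show ((T.orderIsoOfFin hcard) ((T.orderIsoOfFin hcard).symm ⟨e, heT⟩) : Fin (p+1)) = e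
          rw [OrderIso.apply_symm_apply]
        have heU : e ∈ T.erase (mOrd p q T hcard m') := by
          refine Finset.mem_erase.2 ⟨?_, heT⟩
          intro hh
          exact hm'k (mOrd_injective p q T hcard (by rw [hke, hh])).symm
        have hcardU : (T.erase (mOrd p q T hcard m')).card = q+1 := by
          rw [Finset.card_erase_of_mem (mOrd_mem p q T hcard m'), hcard]
          omega
        have hmemface : (fT p q T hcard).app n y
            ∈ (SSet.face p (↑(T.erase (mOrd p q T hcard m')) : Set (Fin (p+1)))).obj n := by
          rintro _ ⟨a, rfl⟩
          rw [fT_asOrderHom]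
          refine Finset.mem_erase.2 ⟨?_, mOrd_mem p q T hcard _⟩
          intro hh
          exact hm'range a (mOrd_injective p q T hcard hh)
        exact h1 n (hA1 _ heU hcardU n hmemface)
      · -- H2
        intro n y hy huniv
        have hW : ∃ W : Finset (Fin (p+1)), e ∈ W ∧ (W ∈ F ∨ W.card = q+1 ∨ W ∈ G0) ∧
            Set.range (SSet.stdSimplex.asOrderHom ((fT p q T hcard).app n y)) ⊆ ↑W := by
          rw [hM] at hy
          rcases mem_sup_iff.1 hy with h' | h'
          · obtain ⟨W, h1', h2', h3'⟩ := hA2 _ h'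
            exact ⟨W, h1', h2'.imp id Or.inl, h3'⟩
          · obtain ⟨T', hmem⟩ := (mem_iSup_iff _).1 h'
            obtain ⟨hT', hface'⟩ := (mem_iSup_iff _).1 hmem
            exact ⟨T', (hG0 T' hT').1, Or.inr (Or.inr hT'), hface'⟩
        obtain ⟨W, heW, hWor, hrange⟩ := hW
        have hTW : T ⊆ W := by
          intro s hs
          have ha : (T.orderIsoOfFin hcard).symm ⟨s, hs⟩ ∈
              Set.range (SSet.stdSimplex.asOrderHom y) ∪ {(T.orderIsoOfFin hcard).symm ⟨e, heT⟩} := by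
            rw [huniv]; exact Set.mem_univ _
          have hs' : mOrd p q T hcard ((T.orderIsoOfFin hcard).symm ⟨s, hs⟩) = s := by
            show ((T.orderIsoOfFin hcard) ((T.orderIsoOfFin hcard).symm ⟨s, hs⟩) : Fin (p+1)) = s
            rw [OrderIso.apply_symm_apply]
          rcases ha with ⟨b, hb⟩ | ha
          · have : SSet.stdSimplex.asOrderHom ((fT p q T hcard).app n y) b = s := by
              rw [fT_asOrderHom, hb, hs']
            exact hrange ⟨b, this⟩
          · have hse : s = e := by
              rw [Set.mem_singleton_iff] at ha
              have := congrArg (mOrd p q T hcard) ha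
              rwa [hs', (by
                show ((T.orderIsoOfFin hcard) ((T.orderIsoOfFin hcard).symm ⟨e, heT⟩)
                  : Fin (p+1)) = e
                rw [OrderIso.apply_symm_apply] :
                mOrd p q T hcard ((T.orderIsoOfFin hcard).symm ⟨e, heT⟩) = e)] at this
            rw [hse]; exact heW
        rcases hWor with hWF | hWc | hWG0
        · exact hnsub ⟨W, hWF, hTW⟩
        · have := Finset.card_le_card hTW
          omega
        · have : T = W := Finset.eq_of_subset_of_card_le hTW
            (by rw [(hG0 W hWG0).2.1, hcard])
          exact hTG (this ▸ hWG0)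
    rw [hkey]
    infer_instance

end SkelAux

open SkelAux
/-- For `F` an inhabited finite set of faces of `Δ[p]` containing a common vertex `e`,
and `F_j = F ∪ {T : e ∈ T, |T| = j + 1}`, the inclusion
`⋃_{T ∈ F_{j-1}} Face T ⟶ ⋃_{T ∈ F_j} Face T` (for `1 ≤ j ≤ p`) has the left lifting
property with respect to all Kan fibrations. -/
theorem skeleton_step_llp (p : ℕ) (e : Fin (p + 1)) (F : Finset (Finset (Fin (p + 1))))
    (hne : F.Nonempty) (he : ∀ T ∈ F, e ∈ T) (j : ℕ) (hj1 : 1 ≤ j) (hjp : j ≤ p)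
    (hle :
      (⨆ T ∈ ↑F ∪ setOf (fun T : Finset (Fin (p + 1)) => e ∈ T ∧ T.card = j),
          SSet.face p (T : Set (Fin (p + 1)))) ≤
        ⨆ T ∈ ↑F ∪ setOf (fun T : Finset (Fin (p + 1)) => e ∈ T ∧ T.card = j + 1),
          SSet.face p (T : Set (Fin (p + 1))))
    {X Y : SSet} (g : X ⟶ Y) (hg : IsKanFibration g) :
    HasLiftingProperty (Subpresheaf.ssetHomOfLe hle) g := by
  classical
  obtain ⟨q, rfl⟩ : ∃ q, j = q + 1 := ⟨j - 1, (Nat.succ_pred_eq_of_pos hj1).symm⟩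
  set N : Finset (Finset (Fin (p+1))) :=
    Finset.univ.filter (fun T => e ∈ T ∧ T.card = q+2 ∧ ¬∃ S ∈ F, T ⊆ S) with hN
  refine chain p q e F _ ?_ ?_ g hg N ?_ _ ?_ hle
  · -- hA1
    intro U heU hcardU
    exact le_iSup₂ (f := fun (T : Finset (Fin (p+1)))
      (_ : T ∈ ↑F ∪ setOf (fun T : Finset (Fin (p + 1)) => e ∈ T ∧ T.card = q + 1)) =>
      SSet.face p (T : Set (Fin (p + 1)))) U (Or.inr ⟨heU, hcardU⟩)
  · -- hA2
    intro n x hx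
    obtain ⟨W, hmem⟩ := (mem_iSup_iff _).1 hx
    obtain ⟨hW, hface'⟩ := (mem_iSup_iff _).1 hmem
    rcases hW with hWF | ⟨heW, hcW⟩
    · exact ⟨W, he W hWF, Or.inl hWF, hface'⟩
    · exact ⟨W, heW, Or.inr hcW, hface'⟩
  · -- N property
    intro T hT
    have := (Finset.mem_filter.1 hT).2
    exact this
  · -- key equality
    apply le_antisymm
    · refine iSup_le fun T => iSup_le fun hT => ?_
      rcases hT with hTF | ⟨heT, hcT⟩
      · refine le_trans (le_iSup₂ (f := fun (T' : Finset (Fin (p+1)))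
          (_ : T' ∈ ↑F ∪ setOf (fun T' : Finset (Fin (p + 1)) => e ∈ T' ∧ T'.card = q + 1)) =>
          SSet.face p (T' : Set (Fin (p + 1)))) T (Or.inl hTF)) le_sup_left
      · by_cases hsub : ∃ S ∈ F, T ⊆ S
        · obtain ⟨S, hS, hTS⟩ := hsub
          refine le_trans (face_mono p (Finset.coe_subset.2 hTS)) ?_
          exact le_trans (le_iSup₂ (f := fun (T' : Finset (Fin (p+1)))
            (_ : T' ∈ ↑F ∪ setOf (fun T' : Finset (Fin (p + 1)) => e ∈ T' ∧ T'.card = q + 1)) =>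
            SSet.face p (T' : Set (Fin (p + 1)))) S (Or.inl hS)) le_sup_left
        · have hTN : T ∈ N := by
            rw [hN]
            exact Finset.mem_filter.2 ⟨Finset.mem_univ _, heT, hcT, hsub⟩
          exact le_trans (le_iSup₂ (f := fun (T' : Finset (Fin (p+1)))
            (_ : T' ∈ N) => SSet.face p (T' : Set (Fin (p + 1)))) T hTN) le_sup_right
    · refine sup_le hle (iSup_le fun T => iSup_le fun hT => ?_)
      have hprops := (Finset.mem_filter.1 (by rw [hN] at hT; exact hT)).2
      exact le_iSup₂ (f := fun (T' : Finset (Fin (p+1)))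
        (_ : T' ∈ ↑F ∪ setOf (fun T' : Finset (Fin (p + 1)) => e ∈ T' ∧ T'.card = q + 1 + 1)) =>
        SSet.face p (T' : Set (Fin (p + 1)))) T (Or.inr ⟨hprops.1, hprops.2.1⟩)
end
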